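/- For n = 2 in the filament problem, the determinant of the 4×4 Hermitian matrix m_1(μ, ν) at ν = 0 equals −3μ²(μ+1/2)²(μ+5/4); hence det m_1(μ,0) < 0 for μ > −5/4 with μ ∉ {0, −1/2}, while det m_1(μ,ν) → +∞ as ν → ∞ for μ ≠ 0, so for each such μ > −5/4 and any real γ there exists ν_1 > 0 with det m_1(μ, ν_1) = 0. -/
import Mathlib


open Matrix Complex

/-- The `k = 1` Fourier block of the filament problem for `n = 2`. -/
noncomputable def m₁n2F (γ μ ν : ℝ) : Matrix (Fin 4) (Fin 4) ℂ :=
  !![(μ * (μ * ν ^ 2 + μ + 5 / 2) : ℝ), -(2 * Complex.I * ν * γ * μ), (-(Real.sqrt 2 * μ) : ℝ), 0;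
     2 * Complex.I * ν * γ * μ, (μ * (μ * ν ^ 2 + μ - 3 / 2) : ℝ), 0, (Real.sqrt 2 * μ : ℝ);
     (-(Real.sqrt 2 * μ) : ℝ), 0, (ν ^ 2 + 2 * μ + 1 / 2 : ℝ), -(2 * Complex.I * ν * γ);
     0, (Real.sqrt 2 * μ : ℝ), 2 * Complex.I * ν * γ, (ν ^ 2 + 1 / 2 : ℝ)]

/-- The determinant of `m₁n2F` as a real polynomial in `t = ν ^ 2`. -/
noncomputable def Paux (γ μ t : ℝ) : ℝ :=
  ((-15/16) * μ^2 + (-9/2) * μ^3 + (-27/4) * μ^4 + (-3) * μ^5)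
  + ((-15/4) * μ^2 + (-33/4) * μ^3 + (-3/2) * μ^4 + 14 * γ^2 * μ^2 + 8 * γ^2 * μ^3
      + (-4) * γ^2 * μ^4) * t
  + ((-15/4) * μ^2 + 2 * μ^3 + (5/4) * μ^4 + 5 * μ^5 + (-4) * γ^2 * μ^2 + (-12) * γ^2 * μ^3
      + (-8) * γ^2 * μ^4 + 16 * γ^4 * μ^2) * t^2
  + (μ^3 + 3 * μ^4 + 2 * μ^5 + (-4) * γ^2 * μ^2 + (-4) * γ^2 * μ^4) * t^3
  + μ^4 * t^4

lemma det_eq (γ μ ν : ℝ) : (m₁n2F γ μ ν).det = ((Paux γ μ (ν^2) : ℝ) : ℂ) := by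
  have hs : ((Real.sqrt 2 : ℝ) : ℂ)^2 = 2 := by
    rw [← Complex.ofReal_pow, Real.sq_sqrt (by norm_num : (0:ℝ) ≤ 2)]
    norm_num
  simp [m₁n2F, Matrix.det_succ_row_zero, Fin.sum_univ_succ, Fin.succAbove, Paux]
  linear_combination
    ((-1/2) * (μ:ℂ)^3 + (-1) * (μ:ℂ)^3 * (ν:ℂ)^2 + (-4) * (μ:ℂ)^4
      + (μ:ℂ)^4 * ((Real.sqrt 2:ℝ):ℂ)^2 + (-3) * (μ:ℂ)^4 * (ν:ℂ)^2
      + (-2) * (μ:ℂ)^4 * (ν:ℂ)^4 + (-2) * (μ:ℂ)^5 + (-2) * (μ:ℂ)^5 * (ν:ℂ)^2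
      + (-8) * (γ:ℂ)^2 * (μ:ℂ)^3 * (ν:ℂ)^2 * Complex.I^2) * hs
  + ((-14) * (γ:ℂ)^2 * (μ:ℂ)^2 * (ν:ℂ)^2 + 4 * (γ:ℂ)^2 * (μ:ℂ)^2 * (ν:ℂ)^4
      + 4 * (γ:ℂ)^2 * (μ:ℂ)^2 * (ν:ℂ)^6 + (-8) * (γ:ℂ)^2 * (μ:ℂ)^3 * (ν:ℂ)^2
      + 12 * (γ:ℂ)^2 * (μ:ℂ)^3 * (ν:ℂ)^4 + 4 * (γ:ℂ)^2 * (μ:ℂ)^4 * (ν:ℂ)^2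
      + 8 * (γ:ℂ)^2 * (μ:ℂ)^4 * (ν:ℂ)^4 + 4 * (γ:ℂ)^2 * (μ:ℂ)^4 * (ν:ℂ)^6
      + (-16) * (γ:ℂ)^4 * (μ:ℂ)^2 * (ν:ℂ)^4
      + 16 * (γ:ℂ)^4 * (μ:ℂ)^2 * (ν:ℂ)^4 * Complex.I^2) * Complex.I_sq

lemma neg_lemma (μ : ℝ) (h5 : μ > -5/4) (hμ : μ ≠ 0) (hμ' : μ ≠ -1/2) :
    (-3 * μ ^ 2 * (μ + 1 / 2) ^ 2 * (μ + 5 / 4) : ℝ) < 0 := by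
  have h1 : (0:ℝ) < μ ^ 2 := lt_of_le_of_ne (sq_nonneg μ) (Ne.symm (pow_ne_zero 2 hμ))
  have hne : μ + 1/2 ≠ 0 := by intro h; apply hμ'; linarith
  have h2 : (0:ℝ) < (μ + 1/2) ^ 2 :=
    lt_of_le_of_ne (sq_nonneg _) (Ne.symm (pow_ne_zero 2 hne))
  have h3 : (0:ℝ) < μ + 5/4 := by linarith
  nlinarith [mul_pos (mul_pos h1 h2) h3]

lemma tendsto_Paux (γ μ : ℝ) (hμ : μ ≠ 0) :
    Filter.Tendsto (fun t : ℝ => Paux γ μ t) Filter.atTop Filter.atTop := by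
  have h1 : (0:ℝ) < μ ^ 4 := lt_of_le_of_ne (by positivity) (Ne.symm (pow_ne_zero 4 hμ))
  set c0 : ℝ := (-15/16) * μ^2 + (-9/2) * μ^3 + (-27/4) * μ^4 + (-3) * μ^5 with hc0
  set c1 : ℝ := (-15/4) * μ^2 + (-33/4) * μ^3 + (-3/2) * μ^4 + 14 * γ^2 * μ^2 + 8 * γ^2 * μ^3
      + (-4) * γ^2 * μ^4 with hc1
  set c2 : ℝ := (-15/4) * μ^2 + 2 * μ^3 + (5/4) * μ^4 + 5 * μ^5 + (-4) * γ^2 * μ^2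
      + (-12) * γ^2 * μ^3 + (-8) * γ^2 * μ^4 + 16 * γ^4 * μ^2 with hc2
  set c3 : ℝ := μ^3 + 3 * μ^4 + 2 * μ^5 + (-4) * γ^2 * μ^2 + (-4) * γ^2 * μ^4 with hc3
  set p : Polynomial ℝ := Polynomial.C c0 + Polynomial.C c1 * Polynomial.X
      + Polynomial.C c2 * Polynomial.X^2 + Polynomial.C c3 * Polynomial.X^3
      + Polynomial.C (μ^4) * Polynomial.X^4 with hp
  have hdeg : p.natDegree = 4 := by
    rw [hp]; compute_degree
    · exact pow_ne_zero 4 hμ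
    all_goals norm_num
  have hdeg' : 0 < p.degree := by
    rw [Polynomial.degree_eq_natDegree (by
      intro h
      simp [h] at hdeg), hdeg]
    norm_num
  have hlead : 0 ≤ p.leadingCoeff := by
    rw [Polynomial.leadingCoeff, hdeg, hp]
    simp only [Polynomial.coeff_add, Polynomial.coeff_C_mul, Polynomial.coeff_X_pow,
      Polynomial.coeff_C, Polynomial.coeff_X]
    norm_num
    positivity
  have := p.tendsto_atTop_of_leadingCoeff_nonneg hdeg' hlead
  refine this.congr (fun t => ?_)
  rw [hp]
  simp [Paux, hc0, hc1, hc2, hc3]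

theorem filament_n2_bifurcation (γ : ℝ) :
    (∀ μ : ℝ, (m₁n2F γ μ 0).det =
      ((-3 * μ ^ 2 * (μ + 1 / 2) ^ 2 * (μ + 5 / 4) : ℝ) : ℂ)) ∧
    (∀ μ : ℝ, μ > -5 / 4 → μ ≠ 0 → μ ≠ -1 / 2 →
      (-3 * μ ^ 2 * (μ + 1 / 2) ^ 2 * (μ + 5 / 4) : ℝ) < 0) ∧
    (∀ μ : ℝ, μ ≠ 0 →
      Filter.Tendsto (fun ν : ℝ => ((m₁n2F γ μ ν).det).re) Filter.atTop Filter.atTop) ∧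
    (∀ μ : ℝ, μ > -5 / 4 → μ ≠ 0 → μ ≠ -1 / 2 →
      ∃ ν₁ : ℝ, 0 < ν₁ ∧ (m₁n2F γ μ ν₁).det = 0) := by
  have hP0 : ∀ μ : ℝ, Paux γ μ (0^2 : ℝ) = -3 * μ ^ 2 * (μ + 1 / 2) ^ 2 * (μ + 5 / 4) := by
    intro μ; simp only [Paux]; ring
  refine ⟨fun μ => ?_, fun μ h5 hμ hμ' => neg_lemma μ h5 hμ hμ', fun μ hμ => ?_, ?_⟩
  · rw [det_eq, hP0]
  · have h := (tendsto_Paux γ μ hμ).comp (Filter.tendsto_pow_atTop (two_ne_zero))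
    refine h.congr (fun ν => ?_)
    rw [det_eq]
    simp
  · intro μ h5 hμ hμ'
    have hf0 : Paux γ μ ((0:ℝ)^2) < 0 := by
      rw [hP0]; exact neg_lemma μ h5 hμ hμ'
    have hten := (tendsto_Paux γ μ hμ).comp (Filter.tendsto_pow_atTop (two_ne_zero (α := ℕ)))
    have hev := (hten.eventually_ge_atTop 1).and (Filter.eventually_ge_atTop (1:ℝ))
    obtain ⟨b, hb1, hb0⟩ := hev.exists
    have hb0' : (0:ℝ) ≤ b := by linarith
    have hcont : ContinuousOn (fun ν : ℝ => Paux γ μ (ν^2)) (Set.Icc 0 b) := by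
      apply Continuous.continuousOn
      unfold Paux
      fun_prop
    have hivt := intermediate_value_Icc hb0' hcont
    have h0mem : (0:ℝ) ∈ Set.Icc (Paux γ μ ((0:ℝ)^2)) (Paux γ μ (b^2)) := by
      constructor
      · linarith
      · linarith [show (1:ℝ) ≤ Paux γ μ (b^2) by simpa using hb1]
    obtain ⟨ν₁, hν₁mem, hν₁⟩ := hivt h0mem
    refine ⟨ν₁, ?_, ?_⟩
    · rcases lt_or_eq_of_le hν₁mem.1 with h | h
      · exact h
      · exfalso; rw [← h] at hν₁; simp only at hν₁; linarith [hν₁, hf0]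
    · rw [det_eq]
      simp only at hν₁
      rw [hν₁]
      simp
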